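/- Let 𝒢 = ⟨G_1, …, G_L⟩ be an always-connected temporal graph on n vertices with lifetime L ≥ n − 1. Then 𝒢 is (n−1)-temporally connected; that is, for every t ∈ [L − n + 2] and every ordered pair of vertices v, u, there is a temporal walk from v to u in ⟨G_t, G_{t+1}, …, G_{t+n−2}⟩. -/

import Mathlib

/-- A temporal walk from `v` to `u` in the temporal graph whose snapshots are
`G 0, …, G (L-1)` (0-indexed timeline of lifetime `L`): a sequence of vertices
together with strictly increasing time steps such that each consecutive pair of
vertices is adjacent in the snapshot at the corresponding time. -/
def TWalk {V : Type*} {L : ℕ} (G : Fin L → SimpleGraph V) (v u : V) : Prop :=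
  ∃ (ℓ : ℕ) (w : Fin (ℓ + 1) → V) (t : Fin ℓ → Fin L),
    StrictMono t ∧ w 0 = v ∧ w (Fin.last ℓ) = u ∧
    ∀ i : Fin ℓ, (G (t i)).Adj (w i.castSucc) (w i.succ)

/-- The temporal graph `G` can be explored from `v` by a temporal walk of length
exactly `ℓ`: the walk starts at `v` and visits all vertices. -/
def ExploresIn {V : Type*} {L : ℕ} (G : Fin L → SimpleGraph V) (v : V) (ℓ : ℕ) : Prop :=
  ∃ (w : Fin (ℓ + 1) → V) (t : Fin ℓ → Fin L),
    StrictMono t ∧ w 0 = v ∧ (∀ x : V, ∃ i, w i = x) ∧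
    ∀ i : Fin ℓ, (G (t i)).Adj (w i.castSucc) (w i.succ)

/-- The temporal graph `G` can be explored from `v` (within its lifetime; note that
any temporal walk automatically has length at most `L`). -/
def CanExploreFrom {V : Type*} {L : ℕ} (G : Fin L → SimpleGraph V) (v : V) : Prop :=
  ∃ ℓ : ℕ, ExploresIn G v ℓ

/-- `G` is temporally connected: for every ordered pair of vertices there is a
temporal walk from the first to the second. -/
def TemporallyConnected {V : Type*} {L : ℕ} (G : Fin L → SimpleGraph V) : Prop :=
  ∀ v u : V, TWalk G v u

/-- `G` is `Δ`-temporally connected: every window of `Δ` consecutive snapshots is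
temporally connected. -/
def DeltaTConnected {V : Type*} {L : ℕ} (Δ : ℕ) (G : Fin L → SimpleGraph V) : Prop :=
  ∀ a : ℕ, ∀ _ : a + Δ ≤ L,
    TemporallyConnected (fun i : Fin Δ => G ⟨a + i.val, by have := i.isLt; omega⟩)

/-- `T` is a spanning tree of the graph `U`. -/
def IsSpanningTree {V : Type*} (T U : SimpleGraph V) : Prop :=
  T ≤ U ∧ T.IsTree

/-- The snapshot `H` is `k`-edge-deficient with respect to the graph `F`:
at most `k` edges of `F` are absent from `H`. -/
def KDeficientWrt {V : Type*} (F H : SimpleGraph V) (k : ℕ) : Prop :=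
  (F.edgeSet \ H.edgeSet).ncard ≤ k


section AuxMS

variable {V : Type*} {Δ : ℕ}

/-- Auxiliary reachability predicate: `x` is reachable from `v` using only
snapshots with indices `< j`. -/
def ReachI (H : Fin Δ → SimpleGraph V) (v : V) : ℕ → V → Prop
  | 0, x => x = v
  | j+1, x => ReachI H v j x ∨ ∃ y, ReachI H v j y ∧ ∃ hj : j < Δ, (H ⟨j, hj⟩).Adj y x

lemma reachI_self (H : Fin Δ → SimpleGraph V) (v : V) : ∀ j, ReachI H v j v
  | 0 => rfl
  | j+1 => Or.inl (reachI_self H v j)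

/-- Temporal walk with all time steps `< j`. -/
def TWalkLt (H : Fin Δ → SimpleGraph V) (v u : V) (j : ℕ) : Prop :=
  ∃ (ℓ : ℕ) (w : Fin (ℓ + 1) → V) (t : Fin ℓ → Fin Δ),
    StrictMono t ∧ w 0 = v ∧ w (Fin.last ℓ) = u ∧ (∀ i, (t i).val < j) ∧
    ∀ i : Fin ℓ, (H (t i)).Adj (w i.castSucc) (w i.succ)

lemma twalkLt_step {H : Fin Δ → SimpleGraph V} {v x y : V} {j : ℕ}
    (hw : TWalkLt H v x j) (hj : j < Δ) (hadj : (H ⟨j, hj⟩).Adj x y) :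
    TWalkLt H v y (j + 1) := by
  obtain ⟨ℓ, w, t, hsm, h0, hl, hbd, hadjw⟩ := hw
  refine ⟨ℓ + 1, Fin.snoc w y, Fin.snoc t ⟨j, hj⟩, ?_, ?_, ?_, ?_, ?_⟩
  · intro a b hab
    rcases eq_or_ne b (Fin.last ℓ) with rfl | hb
    · obtain ⟨m, rfl⟩ := Fin.exists_castSucc_eq.mpr (Fin.ne_last_of_lt hab)
      simp only [Fin.snoc_castSucc, Fin.snoc_last]
      exact Fin.mk_lt_mk.mpr (hbd m)
    · obtain ⟨k, rfl⟩ := Fin.exists_castSucc_eq.mpr hb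
      obtain ⟨m, rfl⟩ := Fin.exists_castSucc_eq.mpr (Fin.ne_last_of_lt (hab.trans (Fin.castSucc_lt_last k)))
      simp only [Fin.snoc_castSucc]
      exact hsm (Fin.castSucc_lt_castSucc_iff.mp hab)
  · have : (0 : Fin (ℓ + 2)) = Fin.castSucc 0 := rfl
    rw [this, Fin.snoc_castSucc]; exact h0
  · have : Fin.last (ℓ + 1) = Fin.succ (Fin.last ℓ) := (Fin.succ_last ℓ).symm
    rw [this]; simp [Fin.snoc_last]
  · intro i
    rcases eq_or_ne i (Fin.last ℓ) with rfl | hi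
    · simp [Fin.snoc_last]
    · obtain ⟨k, rfl⟩ := Fin.exists_castSucc_eq.mpr hi
      rw [Fin.snoc_castSucc]
      exact Nat.lt_succ_of_lt (hbd k)
  · intro i
    rcases eq_or_ne i (Fin.last ℓ) with rfl | hi
    · have h1 : (Fin.last ℓ).castSucc = Fin.castSucc (Fin.last ℓ) := rfl
      have h2 : (Fin.last ℓ).succ = Fin.last (ℓ + 1) := Fin.succ_last ℓ
      rw [Fin.snoc_last, h1, h2, Fin.snoc_castSucc, Fin.snoc_last, hl]
      exact hadj
    · obtain ⟨k, rfl⟩ := Fin.exists_castSucc_eq.mpr hi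
      have h2 : (Fin.castSucc k).succ = Fin.castSucc k.succ := Fin.succ_castSucc k
      rw [h2]
      simp only [Fin.snoc_castSucc]
      exact hadjw k

lemma reachI_twalkLt {H : Fin Δ → SimpleGraph V} {v : V} :
    ∀ {j : ℕ} {x : V}, ReachI H v j x → TWalkLt H v x j := by
  intro j
  induction j with
  | zero =>
    intro x hx
    refine ⟨0, fun _ => v, Fin.elim0, fun i => i.elim0, rfl, hx ▸ rfl, fun i => i.elim0,
      fun i => i.elim0⟩
  | succ j ih =>
    intro x hx
    rcases hx with h | ⟨y, hy, hj, hadj⟩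
    · obtain ⟨ℓ, w, t, hsm, h0, hl, hbd, hadjw⟩ := ih h
      exact ⟨ℓ, w, t, hsm, h0, hl, fun i => Nat.lt_succ_of_lt (hbd i), hadjw⟩
    · exact twalkLt_step (ih hy) hj hadj

lemma crossing_edge {G : SimpleGraph V} {S : Set V} :
    ∀ {a b : V}, G.Walk a b → a ∈ S → b ∉ S → ∃ x y, x ∈ S ∧ y ∉ S ∧ G.Adj x y := by
  intro a b p
  induction p with
  | nil => exact fun ha hb => absurd ha hb
  | @cons a c b h q ih =>
    intro ha hb
    by_cases hc : c ∈ S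
    · exact ih hc hb
    · exact ⟨a, c, ha, hc, h⟩

end AuxMS

/-- **Fact (Michail–Spirakis).** Every always-connected temporal graph on `n`
vertices with lifetime `L ≥ n - 1` is `(n-1)`-temporally connected: every window of
`n - 1` consecutive snapshots is temporally connected. -/
theorem always_connected_temporally_connected (V : Type*) [Fintype V] (n L : ℕ)
    (hn : Fintype.card V = n) (hL : n - 1 ≤ L)
    (G : Fin L → SimpleGraph V)
    (hconn : ∀ t : Fin L, (G t).Connected) :
    DeltaTConnected (n - 1) G := by
  intro a ha v u
  set H : Fin (n - 1) → SimpleGraph V :=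
    (fun i : Fin (n - 1) => G ⟨a + i.val, by have := i.isLt; omega⟩) with hH
  have hnpos : 0 < n := by
    have : 0 < Fintype.card V := Fintype.card_pos_iff.mpr ⟨v⟩
    omega
  have hconn' : ∀ (j : ℕ) (hj : j < n - 1), (H ⟨j, hj⟩).Connected := fun j hj => hconn _
  have claim : ∀ j, j ≤ n - 1 →
      (∀ x, ReachI H v j x) ∨ j + 1 ≤ (setOf (ReachI H v j)).ncard := by
    intro j
    induction j with
    | zero =>
      intro _
      right
      have hs : setOf (ReachI H v 0) = {v} := by
        ext x; simp [ReachI]; exact Iff.rfl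
      rw [hs, Set.ncard_singleton]
    | succ j ih =>
      intro hj
      rcases ih (by omega) with hall | hcard
      · exact Or.inl fun x => Or.inl (hall x)
      by_cases hall2 : ∀ x, ReachI H v (j + 1) x
      · exact Or.inl hall2
      right
      push_neg at hall2
      obtain ⟨u0, hu0⟩ := hall2
      have hu0' : ¬ ReachI H v j u0 := fun h => hu0 (Or.inl h)
      have hjΔ : j < n - 1 := by omega
      obtain ⟨p⟩ := (hconn' j hjΔ).preconnected v u0
      obtain ⟨x, y, hx, hy, hadj⟩ := crossing_edge p (reachI_self H v j) hu0'
      have hss : setOf (ReachI H v j) ⊂ setOf (ReachI H v (j + 1)) := by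
        constructor
        · intro z hz; exact Or.inl hz
        · intro hsub
          exact hy (hsub (show ReachI H v (j + 1) y from Or.inr ⟨x, hx, hjΔ, hadj⟩))
      have := Set.ncard_lt_ncard hss (Set.toFinite _)
      omega
  have key : ∀ x, ReachI H v (n - 1) x := by
    rcases claim (n - 1) le_rfl with hall | hcard
    · exact hall
    · have huniv : setOf (ReachI H v (n - 1)) = Set.univ := by
        apply Set.eq_of_subset_of_ncard_le (Set.subset_univ _) ?_ Set.finite_univ
        rw [Set.ncard_univ, Nat.card_eq_fintype_card, hn]
        omega
      rw [Set.eq_univ_iff_forall] at huniv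
      exact huniv
  obtain ⟨ℓ, w, t, hsm, h0, hl, _, hadjw⟩ := reachI_twalkLt (key u)
  exact ⟨ℓ, w, t, hsm, h0, hl, hadjw⟩
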